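/- Let P = ℂ[x,y,z,t] and S = ℂ[x,y,z] ⊆ P. For λ ∈ ℂ* let σ(λ) be the graded ℂ-algebra automorphism of P with x ↦ x, y ↦ y, z ↦ z, t ↦ λt, and for α ∈ ℂ and a fixed nonzero linear form ℓ ∈ S_1 let u_α be the graded automorphism with x ↦ x, y ↦ y, z ↦ z, t ↦ t + αℓ. Let I ⊆ P be a homogeneous ideal such that ℓ is a nonzerodivisor on P/I, and let d ≥ 1 be such that the degree-d component I_d ⊆ P_d is not invariant under the σ-action (there is λ_0 ∈ ℂ* with σ(λ_0)(I_d) ≠ I_d). Then for all but finitely many α ∈ ℂ the σ-isotropy of the subspace u_α(I_d) is trivial: for λ, μ ∈ ℂ*, σ(λ)(u_α(I_d)) = σ(μ)(u_α(I_d)) implies λ = μ. -/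

import Mathlib

open MvPolynomial

/-- The graded `ℂ`-algebra endomorphism `σ(λ)` of `ℂ[x,y,z,t]` with
`x ↦ x, y ↦ y, z ↦ z, t ↦ λ·t` (the variable `t` is `X 3`). -/
noncomputable def sigmaAut (lam : ℂ) :
    MvPolynomial (Fin 4) ℂ →ₐ[ℂ] MvPolynomial (Fin 4) ℂ :=
  aeval fun i : Fin 4 => if i = 3 then C lam * X 3 else X i

/-- The graded `ℂ`-algebra endomorphism `u_α` of `ℂ[x,y,z,t]` with
`x ↦ x, y ↦ y, z ↦ z, t ↦ t + α·ℓ`. -/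
noncomputable def uAut (ℓ : MvPolynomial (Fin 4) ℂ) (α : ℂ) :
    MvPolynomial (Fin 4) ℂ →ₐ[ℂ] MvPolynomial (Fin 4) ℂ :=
  aeval fun i : Fin 4 => if i = 3 then X 3 + C α * ℓ else X i

/-- The degree-`d` component `I_d = I ∩ P_d` of an ideal `I ⊆ ℂ[x,y,z,t]`, as a
`ℂ`-subspace of the polynomial ring. -/
noncomputable def degPart (I : Ideal (MvPolynomial (Fin 4) ℂ)) (d : ℕ) :
    Submodule ℂ (MvPolynomial (Fin 4) ℂ) :=
  Submodule.restrictScalars ℂ I ⊓ homogeneousSubmodule (Fin 4) ℂ d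

namespace Stmt4

abbrev P := MvPolynomial (Fin 4) ℂ

lemma aeval_of_vars (g : Fin 4 → P) (p : P) (h : ∀ i ∈ p.vars, g i = X i) :
    aeval g p = p := by
  have h1 : eval₂Hom (algebraMap ℂ P) g p = eval₂Hom (algebraMap ℂ P) X p :=
    eval₂Hom_congr' rfl (fun i hi _ => h i hi) rfl
  have h2 : aeval g p = eval₂Hom (algebraMap ℂ P) g p := rfl
  rw [h2, h1]
  exact aeval_X_left_apply p

end Stmt4

namespace Stmt4

lemma hom_C (f : P →ₐ[ℂ] P) (c : ℂ) : f (C c) = C c := by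
  simpa using f.commutes c

variable {ℓ : P}

lemma sigma_ell (hℓt : (3 : Fin 4) ∉ ℓ.vars) (ν : ℂ) : sigmaAut ν ℓ = ℓ :=
  aeval_of_vars _ _ (fun i hi => by
    rw [if_neg]; rintro rfl; exact hℓt hi)

lemma u_ell (hℓt : (3 : Fin 4) ∉ ℓ.vars) (α : ℂ) : uAut ℓ α ℓ = ℓ :=
  aeval_of_vars _ _ (fun i hi => by
    rw [if_neg]; rintro rfl; exact hℓt hi)

lemma sigma_X3 (ν : ℂ) : sigmaAut ν (X 3) = C ν * X 3 := by
  simp [sigmaAut]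

lemma u_X3 (α : ℂ) : uAut ℓ α (X 3) = X 3 + C α * ℓ := by
  simp [uAut]

lemma sigma_X (ν : ℂ) {i : Fin 4} (hi : i ≠ 3) : sigmaAut ν (X i) = X i := by
  simp [sigmaAut, hi]

lemma u_X (α : ℂ) {i : Fin 4} (hi : i ≠ 3) : uAut ℓ α (X i) = X i := by
  simp [uAut, hi]

lemma sigma_comp (a b : ℂ) : (sigmaAut a).comp (sigmaAut b) = sigmaAut (a * b) := by
  apply algHom_ext
  intro i
  by_cases hi : i = 3
  · subst hi
    simp only [AlgHom.comp_apply, sigma_X3, map_mul, hom_C]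
    ring
  · simp [sigma_X _ hi, hi, AlgHom.comp_apply]

lemma sigma_one : sigmaAut (1 : ℂ) = AlgHom.id ℂ P := by
  apply algHom_ext
  intro i
  by_cases hi : i = 3
  · subst hi; simp [sigma_X3]
  · simp [sigma_X _ hi]

lemma u_comp (hℓt : (3 : Fin 4) ∉ ℓ.vars) (a b : ℂ) :
    (uAut ℓ a).comp (uAut ℓ b) = uAut ℓ (a + b) := by
  apply algHom_ext
  intro i
  by_cases hi : i = 3
  · subst hi
    simp only [AlgHom.comp_apply, u_X3, map_add, map_mul, hom_C, u_ell hℓt, map_add]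
    ring
  · simp [u_X _ hi, hi, AlgHom.comp_apply]

lemma u_zero : uAut ℓ 0 = AlgHom.id ℂ P := by
  apply algHom_ext
  intro i
  by_cases hi : i = 3
  · subst hi; simp [u_X3]
  · simp [u_X _ hi]

lemma sigma_comp_u (hℓt : (3 : Fin 4) ∉ ℓ.vars) (α : ℂ) {ν : ℂ} (hν : ν ≠ 0) :
    (sigmaAut ν).comp (uAut ℓ α) = (uAut ℓ (α / ν)).comp (sigmaAut ν) := by
  apply algHom_ext
  intro i
  by_cases hi : i = 3
  · subst hi
    simp only [AlgHom.comp_apply, u_X3, sigma_X3, map_add, map_mul, hom_C, sigma_ell hℓt,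
      u_ell hℓt, u_X3]
    have h : (C ν : P) * C (α / ν) = C α := by
      rw [← map_mul]; congr 1; field_simp
    linear_combination (-ℓ : P) * h
  · simp [u_X _ hi, sigma_X _ hi, hi, AlgHom.comp_apply]

end Stmt4

section Chunk2
namespace Stmt4

variable {ℓ : P}

lemma map_comp' (f g : P →ₐ[ℂ] P) (V : Submodule ℂ P) :
    Submodule.map (f.comp g).toLinearMap V
      = Submodule.map f.toLinearMap (Submodule.map g.toLinearMap V) := by
  rw [AlgHom.comp_toLinearMap, Submodule.map_comp]

lemma prod_split (s : Fin 4 →₀ ℕ) (g : Fin 4 → P) :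
    (s.prod fun i k => g i ^ k)
      = g 3 ^ (s 3) * ((s.erase 3).prod fun i k => g i ^ k) := by
  conv_lhs => rw [← Finsupp.single_add_erase 3 s]
  rw [Finsupp.prod_add_index' (fun a => pow_zero (g a)) (fun a b₁ b₂ => pow_add (g a) b₁ b₂)]
  congr 1
  exact Finsupp.prod_single_index (pow_zero (g 3))

lemma erase_prod_X (s : Fin 4 →₀ ℕ) (g : Fin 4 → P) (hg : ∀ i, i ≠ 3 → g i = X i) :
    ((s.erase 3).prod fun i k => g i ^ k) = ((s.erase 3).prod fun i k => X i ^ k) := by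
  apply Finsupp.prod_congr
  intro i hi
  rw [Finsupp.support_erase, Finset.mem_erase] at hi
  rw [hg i hi.1]

lemma monomial_split (s : Fin 4 →₀ ℕ) (c : ℂ) :
    monomial s c = X 3 ^ (s 3) * monomial (s.erase 3) c := by
  rw [monomial_eq, monomial_eq (s := s.erase 3), prod_split s X]
  ring

lemma u_monomial (γ : ℂ) (s : Fin 4 →₀ ℕ) (c : ℂ) :
    uAut ℓ γ (monomial s c) = (X 3 + C γ * ℓ) ^ (s 3) * monomial (s.erase 3) c := by
  show aeval _ (monomial s c) = _
  rw [aeval_monomial, prod_split, erase_prod_X _ _ (fun i hi => by simp [hi])]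
  simp only [if_true, ite_true, eq_self_iff_true]
  rw [monomial_eq]
  show (C c : P) * _ = _
  ring

lemma sigma_monomial (ν : ℂ) (s : Fin 4 →₀ ℕ) (c : ℂ) :
    sigmaAut ν (monomial s c) = ν ^ (s 3) • monomial s c := by
  show aeval _ (monomial s c) = _
  rw [aeval_monomial, prod_split, erase_prod_X _ _ (fun i hi => by simp [hi])]
  simp only [if_true, ite_true, eq_self_iff_true]
  rw [smul_eq_C_mul, monomial_split s c, monomial_eq]
  show (C c : P) * ((C ν * X 3) ^ s 3 * _) = _
  rw [mul_pow, ← map_pow]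
  ring

end Stmt4
end Chunk2

section Chunk3
namespace Stmt4

noncomputable def tcomp (k : ℕ) (f : P) : P :=
  ∑ s ∈ f.support.filter (fun s => s 3 = k), monomial s (f.coeff s)

noncomputable def strip (k : ℕ) (f : P) : P :=
  ∑ s ∈ f.support.filter (fun s => s 3 = k), monomial (s.erase 3) (f.coeff s)

noncomputable def qc (ℓ : P) (m : ℕ) (f : P) : P :=
  ∑ s ∈ f.support, ((s 3).choose m : ℂ) •
    (X 3 ^ (s 3 - m) * ℓ ^ m * monomial (s.erase 3) (f.coeff s))

variable {ℓ : P}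

lemma coeff_tcomp (k : ℕ) (f : P) (u : Fin 4 →₀ ℕ) :
    (tcomp k f).coeff u = if u 3 = k then f.coeff u else 0 := by
  classical
  rw [tcomp, coeff_sum]
  simp only [coeff_monomial]
  rw [Finset.sum_ite_eq' (f.support.filter (fun s => s 3 = k)) u (fun s => f.coeff s)]
  by_cases hu : u ∈ f.support
  · simp [Finset.mem_filter, hu]
  · simp [Finset.mem_filter, hu, notMem_support_iff.1 hu]

lemma tcomp_zero (k : ℕ) : tcomp k (0 : P) = 0 := by
  simp [tcomp]

lemma sum_tcomp (d : ℕ) (f : P) (hf : ∀ s ∈ f.support, s 3 ≤ d) :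
    ∑ k ∈ Finset.range (d + 1), tcomp k f = f := by
  classical
  conv_rhs => rw [f.as_sum]
  simp only [tcomp]
  exact Finset.sum_fiberwise_of_maps_to
    (fun s hs => Finset.mem_range.2 (Nat.lt_succ_of_le (hf s hs))) _

lemma sigma_tcomp (ν : ℂ) (k : ℕ) (f : P) :
    sigmaAut ν (tcomp k f) = ν ^ k • tcomp k f := by
  rw [tcomp, map_sum, Finset.smul_sum]
  apply Finset.sum_congr rfl
  intro s hs
  rw [sigma_monomial, (Finset.mem_filter.1 hs).2]

lemma tcomp_mem_homog {d : ℕ} {f : P} (hf : f ∈ homogeneousSubmodule (Fin 4) ℂ d) (k : ℕ) :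
    tcomp k f ∈ homogeneousSubmodule (Fin 4) ℂ d := by
  rw [mem_homogeneousSubmodule] at hf ⊢
  intro u hu
  rw [coeff_tcomp] at hu
  by_cases h3 : u 3 = k
  · rw [if_pos h3] at hu
    exact hf hu
  · rw [if_neg h3] at hu
    exact absurd rfl hu

lemma tcomp_eq_X3_pow_mul_strip (k : ℕ) (f : P) :
    tcomp k f = X 3 ^ k * strip k f := by
  rw [tcomp, strip, Finset.mul_sum]
  apply Finset.sum_congr rfl
  intro s hs
  rw [← (Finset.mem_filter.1 hs).2, ← monomial_split]

lemma q_top {τ : ℕ} {f : P} (hτ : ∀ s ∈ f.support, s 3 ≤ τ) :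
    qc ℓ τ f = ℓ ^ τ * strip τ f := by
  classical
  rw [qc, strip, Finset.mul_sum,
    ← Finset.sum_filter_add_sum_filter_not f.support (fun s => s 3 = τ)]
  have h2 : ∀ s ∈ f.support.filter (fun s => ¬ s 3 = τ),
      ((s 3).choose τ : ℂ) • (X 3 ^ (s 3 - τ) * ℓ ^ τ * monomial (s.erase 3) (f.coeff s)) = 0 := by
    intro s hs
    obtain ⟨hs1, hs2⟩ := Finset.mem_filter.1 hs
    rw [Nat.choose_eq_zero_of_lt (lt_of_le_of_ne (hτ s hs1) hs2)]
    simp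
  rw [Finset.sum_congr rfl h2, Finset.sum_const_zero, add_zero]
  apply Finset.sum_congr rfl
  intro s hs
  rw [(Finset.mem_filter.1 hs).2]
  simp [Nat.choose_self]

lemma u_monomial_expand (d : ℕ) (γ : ℂ) (s : Fin 4 →₀ ℕ) (c : ℂ) (hs : s 3 ≤ d) :
    uAut ℓ γ (monomial s c) = ∑ m ∈ Finset.range (d + 1), γ ^ m •
      (((s 3).choose m : ℂ) • (X 3 ^ (s 3 - m) * ℓ ^ m * monomial (s.erase 3) c)) := by
  rw [u_monomial γ s c, add_comm ((X 3 : P)) (C γ * ℓ), add_pow, Finset.sum_mul]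
  trans (∑ m ∈ Finset.range (d + 1),
      (C γ * ℓ) ^ m * X 3 ^ (s 3 - m) * ((s 3).choose m : P) * monomial (s.erase 3) c)
  · apply Finset.sum_subset (Finset.range_subset_range.2 (Nat.succ_le_succ hs))
    intro m _ hm
    rw [Nat.choose_eq_zero_of_lt (by
      rcases Nat.lt_or_ge (s 3) m with h | h
      · exact h
      · exact absurd (Finset.mem_range.2 (Nat.lt_succ_of_le h)) hm)]
    simp
  · apply Finset.sum_congr rfl
    intro m _
    rw [mul_pow, ← map_pow, ← map_natCast (C : ℂ →+* P) ((s 3).choose m),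
      smul_eq_C_mul, smul_eq_C_mul]
    ring

lemma taylor (d : ℕ) (γ : ℂ) (f : P) (hf : ∀ s ∈ f.support, s 3 ≤ d) :
    uAut ℓ γ f = ∑ m ∈ Finset.range (d + 1), γ ^ m • qc ℓ m f := by
  conv_lhs => rw [f.as_sum]
  rw [map_sum]
  rw [Finset.sum_congr rfl (fun s hs => u_monomial_expand d γ s (f.coeff s) (hf s hs))]
  rw [Finset.sum_comm]
  apply Finset.sum_congr rfl
  intro m _
  rw [qc, Finset.smul_sum]

end Stmt4
end Chunk3

section Chunk4
namespace Stmt4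

variable {ℓ : P}

lemma vandermonde_extract (n : ℕ) (γ : Fin (n + 1) → ℂ) (hγ : Function.Injective γ)
    (V : Submodule ℂ P) (Q : Fin (n + 1) → P)
    (h : ∀ j, (∑ m : Fin (n + 1), γ j ^ (m : ℕ) • Q m) ∈ V) :
    ∀ m, Q m ∈ V := by
  classical
  set W : Matrix (Fin (n + 1)) (Fin (n + 1)) ℂ := Matrix.vandermonde γ with hW
  have hdet : IsUnit W.det := by
    rw [hW, Matrix.det_vandermonde]
    rw [isUnit_iff_ne_zero]
    apply Finset.prod_ne_zero_iff.2
    intro i _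
    apply Finset.prod_ne_zero_iff.2
    intro j hj
    have hij : i ≠ j := ne_of_lt (Finset.mem_Ioi.1 hj)
    exact sub_ne_zero_of_ne (fun hc => hij (hγ hc).symm)
  intro m
  have key : ∀ j, (∑ m' : Fin (n + 1), W j m' • Q m') ∈ V := by
    intro j
    simpa [hW, Matrix.vandermonde] using h j
  have e1 : Q m = ∑ m' : Fin (n + 1), ((W⁻¹ * W) m m') • Q m' := by
    rw [Matrix.nonsing_inv_mul _ hdet]
    simp [Matrix.one_apply, ite_smul]
  have e2 : ∑ m' : Fin (n + 1), ((W⁻¹ * W) m m') • Q m'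
      = ∑ j : Fin (n + 1), W⁻¹ m j • ∑ m' : Fin (n + 1), W j m' • Q m' := by
    simp only [Matrix.mul_apply, Finset.sum_smul, Finset.smul_sum, smul_smul]
    rw [Finset.sum_comm]
  rw [e1, e2]
  exact Submodule.sum_mem _ (fun j _ => Submodule.smul_mem _ _ (key j))

lemma ell_pow_exchange (I : Ideal P) (hreg : ∀ g : P, ℓ * g ∈ I → g ∈ I)
    (j : ℕ) (h : P) (hh : ℓ ^ j * h ∈ I) : (X 3 : P) ^ j * h ∈ I := by
  induction j with
  | zero => simpa using hh
  | succ j ih =>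
    have h1 : ℓ ^ j * h ∈ I := by
      apply hreg
      have : ℓ * (ℓ ^ j * h) = ℓ ^ (j + 1) * h := by ring
      rw [this]
      exact hh
    have h2 := ih h1
    have : (X 3 : P) ^ (j + 1) * h = X 3 * (X 3 ^ j * h) := by ring
    rw [this]
    exact Ideal.mul_mem_left _ _ h2

lemma support_le_of_homog {d : ℕ} {f : P} (hf : f ∈ homogeneousSubmodule (Fin 4) ℂ d) :
    ∀ s ∈ f.support, s 3 ≤ d := by
  intro s hs
  have hf' := (mem_homogeneousSubmodule _ _).1 hf
  have h2 : (Finsupp.weight 1) s = d := hf' (mem_support_iff.1 hs)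
  have h1 : s 3 ≤ (Finsupp.weight 1) s :=
    Finsupp.le_weight 1 (by simp) s
  omega

lemma tcomp_eq_zero_of_gt {k : ℕ} {f : P} (hk : degreeOf 3 f < k) : tcomp k f = 0 := by
  rw [tcomp]
  rw [Finset.filter_false_of_mem, Finset.sum_empty]
  intro s hs
  have : s 3 ≤ degreeOf 3 f := by
    rw [degreeOf_eq_sup]
    exact Finset.le_sup (f := fun s => s 3) hs
  omega

lemma deg3_le (f : P) (s : Fin 4 →₀ ℕ) (hs : s ∈ f.support) : s 3 ≤ degreeOf 3 f := by
  rw [degreeOf_eq_sup]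
  exact Finset.le_sup (f := fun s => s 3) hs

end Stmt4
end Chunk4

section Chunk5
namespace Stmt4

variable {ℓ : P}

lemma mem_degPart {I : Ideal P} {d : ℕ} {f : P} :
    f ∈ degPart I d ↔ f ∈ I ∧ f ∈ homogeneousSubmodule (Fin 4) ℂ d :=
  Iff.rfl

lemma tcomp_top_mem (I : Ideal P) (d : ℕ)
    (hreg : ∀ g : P, ℓ * g ∈ I → g ∈ I)
    (γ : Fin (d + 1) → ℂ) (hγ : Function.Injective γ)
    (hγFix : ∀ j, Submodule.map (uAut ℓ (γ j)).toLinearMap (degPart I d) = degPart I d)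
    (f : P) (hf : f ∈ degPart I d) :
    tcomp (degreeOf 3 f) f ∈ degPart I d := by
  classical
  obtain ⟨hfI, hfH⟩ := mem_degPart.1 hf
  have hsupp : ∀ s ∈ f.support, s 3 ≤ d := support_le_of_homog hfH
  have hτd : degreeOf 3 f ≤ d := by
    rw [degreeOf_eq_sup]
    exact Finset.sup_le hsupp
  have hq : ∀ m : Fin (d + 1), qc ℓ (m : ℕ) f ∈ degPart I d := by
    apply vandermonde_extract d γ hγ
    intro j
    have hmem : uAut ℓ (γ j) f ∈ degPart I d := by
      rw [← hγFix j]
      exact ⟨f, hf, rfl⟩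
    rw [taylor d (γ j) f hsupp] at hmem
    rwa [Fin.sum_univ_eq_sum_range (fun m => γ j ^ m • qc ℓ m f) (d + 1)]
  have hqτ : qc ℓ (degreeOf 3 f) f ∈ degPart I d := hq ⟨degreeOf 3 f, Nat.lt_succ_of_le hτd⟩
  have hqtop : qc ℓ (degreeOf 3 f) f = ℓ ^ (degreeOf 3 f) * strip (degreeOf 3 f) f :=
    q_top (fun s hs => deg3_le f s hs)
  have hI1 : ℓ ^ (degreeOf 3 f) * strip (degreeOf 3 f) f ∈ I := by
    have := (mem_degPart.1 hqτ).1
    rwa [hqtop] at this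
  have hI2 : (X 3 : P) ^ (degreeOf 3 f) * strip (degreeOf 3 f) f ∈ I :=
    ell_pow_exchange I hreg _ _ hI1
  refine mem_degPart.2 ⟨?_, tcomp_mem_homog hfH _⟩
  rw [tcomp_eq_X3_pow_mul_strip]
  exact hI2

lemma tcomp_all_mem (I : Ideal P) (d : ℕ)
    (hreg : ∀ g : P, ℓ * g ∈ I → g ∈ I)
    (γ : Fin (d + 1) → ℂ) (hγ : Function.Injective γ)
    (hγFix : ∀ j, Submodule.map (uAut ℓ (γ j)).toLinearMap (degPart I d) = degPart I d) :
    ∀ f ∈ degPart I d, ∀ k, tcomp k f ∈ degPart I d := by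
  suffices H : ∀ n, ∀ f, f ∈ degPart I d → degreeOf 3 f ≤ n →
      ∀ k, tcomp k f ∈ degPart I d from fun f hf k => H _ f hf le_rfl k
  intro n
  induction n with
  | zero =>
    intro f hf hdeg k
    rcases Nat.eq_zero_or_pos k with rfl | hk
    · have := tcomp_top_mem I d hreg γ hγ hγFix f hf
      rwa [Nat.le_zero.1 hdeg] at this
    · rw [tcomp_eq_zero_of_gt (lt_of_le_of_lt hdeg hk)]
      exact zero_mem _
  | succ n ih =>
    intro f hf hdeg k
    by_cases hn : degreeOf 3 f ≤ n
    · exact ih f hf hn k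
    · have htop := tcomp_top_mem I d hreg γ hγ hγFix f hf
      by_cases hk : k = degreeOf 3 f
      · rwa [hk]
      · set f' := f - tcomp (degreeOf 3 f) f with hf'def
        have hf' : f' ∈ degPart I d := Submodule.sub_mem _ hf htop
        have hcoeff' : ∀ u : Fin 4 →₀ ℕ,
            f'.coeff u = if u 3 = degreeOf 3 f then 0 else f.coeff u := by
          intro u
          rw [hf'def, coeff_sub, coeff_tcomp]
          split_ifs with h <;> simp
        have hdeg' : degreeOf 3 f' ≤ n := by
          rw [degreeOf_eq_sup]
          apply Finset.sup_le
          intro s hs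
          have h1 := mem_support_iff.1 hs
          rw [hcoeff' s] at h1
          by_cases h2 : s 3 = degreeOf 3 f
          · rw [if_pos h2] at h1
            exact absurd rfl h1
          · rw [if_neg h2] at h1
            have h3 := deg3_le f s (mem_support_iff.2 h1)
            omega
        have heq : tcomp k f = tcomp k f' := by
          apply MvPolynomial.ext
          intro u
          rw [coeff_tcomp, coeff_tcomp, hcoeff' u]
          by_cases h3 : u 3 = k
          · rw [if_pos h3, if_pos h3, if_neg (fun hc => hk (by omega))]
          · rw [if_neg h3, if_neg h3]
        rw [heq]
        exact ih f' hf' hdeg' k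

lemma sigma_fix_of_uFix (I : Ideal P) (d : ℕ)
    (hreg : ∀ g : P, ℓ * g ∈ I → g ∈ I)
    (hFix : {γ : ℂ |
      Submodule.map (uAut ℓ γ).toLinearMap (degPart I d) = degPart I d}.Infinite)
    {ν : ℂ} (hν : ν ≠ 0) :
    Submodule.map (sigmaAut ν).toLinearMap (degPart I d) = degPart I d := by
  classical
  obtain ⟨t, hts, htc⟩ := hFix.exists_subset_card_eq (d + 1)
  have hcard : Fintype.card (↥t) = d + 1 := by rw [Fintype.card_coe, htc]
  set e := Fintype.equivFinOfCardEq hcard with he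
  set γ : Fin (d + 1) → ℂ := fun j => ((e.symm j : ↥t) : ℂ) with hγdef
  have hγ : Function.Injective γ := fun a b hab =>
    e.symm.injective (Subtype.coe_injective hab)
  have hγFix : ∀ j,
      Submodule.map (uAut ℓ (γ j)).toLinearMap (degPart I d) = degPart I d := by
    intro j
    exact hts (Finset.mem_coe.2 (e.symm j).2)
  have htall := tcomp_all_mem I d hreg γ hγ hγFix
  have hle : ∀ ν' : ℂ,
      Submodule.map (sigmaAut ν').toLinearMap (degPart I d) ≤ degPart I d := by
    intro ν'
    rintro x ⟨f, hf, rfl⟩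
    have hsup : ∀ s ∈ f.support, s 3 ≤ d := support_le_of_homog (mem_degPart.1 hf).2
    have hx : (sigmaAut ν').toLinearMap f = ∑ k ∈ Finset.range (d + 1), ν' ^ k • tcomp k f := by
      show sigmaAut ν' f = _
      conv_lhs => rw [← sum_tcomp d f hsup]
      rw [map_sum]
      exact Finset.sum_congr rfl fun k _ => sigma_tcomp ν' k f
    rw [hx]
    exact Submodule.sum_mem _ fun k _ => Submodule.smul_mem _ _ (htall f hf k)
  apply le_antisymm (hle ν)
  intro x hx
  refine ⟨sigmaAut ν⁻¹ x, hle ν⁻¹ ⟨x, hx, rfl⟩, ?_⟩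
  show (sigmaAut ν) ((sigmaAut ν⁻¹) x) = x
  rw [← AlgHom.comp_apply, sigma_comp, mul_inv_cancel₀ hν, sigma_one]
  rfl

end Stmt4
end Chunk5

section Chunk6
namespace Stmt4

variable {ℓ : P}

lemma map_id' (V : Submodule ℂ P) :
    Submodule.map (AlgHom.id ℂ P).toLinearMap V = V := by
  have : (AlgHom.id ℂ P).toLinearMap = LinearMap.id := rfl
  rw [this, Submodule.map_id]

lemma rel_of_bad (hℓt : (3 : Fin 4) ∉ ℓ.vars) (V : Submodule ℂ P) {α lam mu : ℂ}
    (hlam : lam ≠ 0) (hmu : mu ≠ 0) (hne : lam ≠ mu)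
    (heq : Submodule.map (sigmaAut lam).toLinearMap
        (Submodule.map (uAut ℓ α).toLinearMap V)
      = Submodule.map (sigmaAut mu).toLinearMap
        (Submodule.map (uAut ℓ α).toLinearMap V)) :
    ∃ ν : ℂ, ν ≠ 0 ∧ ν ≠ 1 ∧
      Submodule.map (sigmaAut ν).toLinearMap V
        = Submodule.map (uAut ℓ (α - α / ν)).toLinearMap V := by
  set ν := mu⁻¹ * lam with hνdef
  have hν0 : ν ≠ 0 := mul_ne_zero (inv_ne_zero hmu) hlam
  have hν1 : ν ≠ 1 := by
    intro h
    apply hne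
    field_simp [hνdef] at h
    rw [hνdef] at h; exact ((inv_mul_eq_one₀ hmu).1 h).symm
  have h1 : Submodule.map (sigmaAut ν).toLinearMap
      (Submodule.map (uAut ℓ α).toLinearMap V)
      = Submodule.map (uAut ℓ α).toLinearMap V := by
    calc Submodule.map (sigmaAut ν).toLinearMap (Submodule.map (uAut ℓ α).toLinearMap V)
        = Submodule.map ((sigmaAut mu⁻¹).comp (sigmaAut lam)).toLinearMap
            (Submodule.map (uAut ℓ α).toLinearMap V) := by rw [sigma_comp, ← hνdef]
      _ = Submodule.map (sigmaAut mu⁻¹).toLinearMap (Submodule.map (sigmaAut lam).toLinearMap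
            (Submodule.map (uAut ℓ α).toLinearMap V)) := map_comp' _ _ _
      _ = Submodule.map (sigmaAut mu⁻¹).toLinearMap (Submodule.map (sigmaAut mu).toLinearMap
            (Submodule.map (uAut ℓ α).toLinearMap V)) := by rw [heq]
      _ = Submodule.map ((sigmaAut mu⁻¹).comp (sigmaAut mu)).toLinearMap
            (Submodule.map (uAut ℓ α).toLinearMap V) := (map_comp' _ _ _).symm
      _ = Submodule.map (uAut ℓ α).toLinearMap V := by
            rw [sigma_comp, inv_mul_cancel₀ hmu, sigma_one, map_id']
  have h2 : Submodule.map (uAut ℓ (α / ν)).toLinearMap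
      (Submodule.map (sigmaAut ν).toLinearMap V)
      = Submodule.map (uAut ℓ α).toLinearMap V := by
    rw [← map_comp', ← sigma_comp_u hℓt α hν0, map_comp', h1]
  have h3 : Submodule.map (sigmaAut ν).toLinearMap V
      = Submodule.map (uAut ℓ (α - α / ν)).toLinearMap V := by
    calc Submodule.map (sigmaAut ν).toLinearMap V
        = Submodule.map (uAut ℓ (-(α / ν))).toLinearMap
            (Submodule.map (uAut ℓ (α / ν)).toLinearMap
              (Submodule.map (sigmaAut ν).toLinearMap V)) := by
            rw [← map_comp', u_comp hℓt, neg_add_cancel, u_zero, map_id']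
      _ = Submodule.map (uAut ℓ (-(α / ν))).toLinearMap
            (Submodule.map (uAut ℓ α).toLinearMap V) := by rw [h2]
      _ = Submodule.map ((uAut ℓ (-(α / ν))).comp (uAut ℓ α)).toLinearMap V :=
            (map_comp' _ _ _).symm
      _ = Submodule.map (uAut ℓ (α - α / ν)).toLinearMap V := by
            rw [u_comp hℓt, show -(α / ν) + α = α - α / ν from by ring]
  exact ⟨ν, hν0, hν1, h3⟩

lemma combine (hℓt : (3 : Fin 4) ∉ ℓ.vars) (V : Submodule ℂ P) {ν ν' δ δ' : ℂ}
    (hν0 : ν ≠ 0) (hν'0 : ν' ≠ 0)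
    (h : Submodule.map (sigmaAut ν).toLinearMap V = Submodule.map (uAut ℓ δ).toLinearMap V)
    (h' : Submodule.map (sigmaAut ν').toLinearMap V = Submodule.map (uAut ℓ δ').toLinearMap V) :
    Submodule.map (uAut ℓ ((δ' / ν + δ) - (δ / ν' + δ'))).toLinearMap V = V := by
  have e1 : Submodule.map (sigmaAut (ν * ν')).toLinearMap V
      = Submodule.map (uAut ℓ (δ' / ν + δ)).toLinearMap V := by
    rw [← sigma_comp, map_comp', h', ← map_comp', sigma_comp_u hℓt δ' hν0, map_comp', h,
      ← map_comp', u_comp hℓt]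
  have e2 : Submodule.map (sigmaAut (ν * ν')).toLinearMap V
      = Submodule.map (uAut ℓ (δ / ν' + δ')).toLinearMap V := by
    rw [mul_comm, ← sigma_comp, map_comp', h, ← map_comp', sigma_comp_u hℓt δ hν'0,
      map_comp', h', ← map_comp', u_comp hℓt]
  have e3 := e1.symm.trans e2
  have h := congrArg (Submodule.map (uAut ℓ (-(δ / ν' + δ'))).toLinearMap) e3
  rw [← map_comp', ← map_comp', u_comp hℓt, u_comp hℓt, neg_add_cancel, u_zero, map_id'] at h
  rw [show (δ' / ν + δ) - (δ / ν' + δ') = -(δ / ν' + δ') + (δ' / ν + δ) from by ring]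
  exact h

end Stmt4
end Chunk6


/-- Let `I ⊆ P = ℂ[x,y,z,t]` be a homogeneous ideal, `ℓ ∈ ℂ[x,y,z]₁` a
nonzero linear form that is a nonzerodivisor on `P/I`, and `d ≥ 1` such that `I_d` is not
invariant under the `𝔾ₘ`-action `σ`.  Then for all but finitely many `α ∈ ℂ` the
`σ`-isotropy of `u_α(I_d)` is trivial:
`σ(λ)(u_α(I_d)) = σ(μ)(u_α(I_d))` with `λ, μ ∈ ℂ*` implies `λ = μ`. -/
theorem stmt_4 (I : Ideal (MvPolynomial (Fin 4) ℂ))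
    (hIhom : ∀ f ∈ I, ∀ n : ℕ, homogeneousComponent n f ∈ I)
    (ℓ : MvPolynomial (Fin 4) ℂ) (hℓ0 : ℓ ≠ 0)
    (hℓ1 : ℓ ∈ homogeneousSubmodule (Fin 4) ℂ 1)
    (hℓt : (3 : Fin 4) ∉ ℓ.vars)
    (hreg : ∀ g : MvPolynomial (Fin 4) ℂ, ℓ * g ∈ I → g ∈ I)
    (d : ℕ) (hd : 1 ≤ d)
    (hnotinv : ∃ lam : ℂ, lam ≠ 0 ∧
      Submodule.map (sigmaAut lam).toLinearMap (degPart I d) ≠ degPart I d) :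
    {α : ℂ | ¬ ∀ lam mu : ℂ, lam ≠ 0 → mu ≠ 0 →
        Submodule.map (sigmaAut lam).toLinearMap
            (Submodule.map (uAut ℓ α).toLinearMap (degPart I d)) =
          Submodule.map (sigmaAut mu).toLinearMap
            (Submodule.map (uAut ℓ α).toLinearMap (degPart I d)) →
        lam = mu}.Finite := by
  classical
  by_cases hFix : {γ : ℂ |
      Submodule.map (uAut ℓ γ).toLinearMap (degPart I d) = degPart I d}.Infinite
  · exfalso
    obtain ⟨lam0, hlam0, hne⟩ := hnotinv
    exact hne (Stmt4.sigma_fix_of_uFix I d hreg hFix hlam0)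
  · rw [Set.not_infinite] at hFix
    have hFix0 : ∀ γ : ℂ,
        Submodule.map (uAut ℓ γ).toLinearMap (degPart I d) = degPart I d → γ = 0 := by
      intro γ hγ
      by_contra hγ0
      have hall : ∀ n : ℕ,
          Submodule.map (uAut ℓ ((n : ℂ) * γ)).toLinearMap (degPart I d) = degPart I d := by
        intro n
        induction n with
        | zero =>
          rw [Nat.cast_zero, zero_mul, Stmt4.u_zero]
          exact Stmt4.map_id' _
        | succ n ihn =>
          have hstep : ((n + 1 : ℕ) : ℂ) * γ = γ + (n : ℂ) * γ := by push_cast; ring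
          rw [hstep, ← Stmt4.u_comp hℓt, Stmt4.map_comp', ihn, hγ]
      have hinj : Function.Injective (fun n : ℕ => (n : ℂ) * γ) := by
        intro a b hab
        simp only at hab
        have := mul_right_cancel₀ hγ0 hab
        exact_mod_cast this
      have hinf : {γ' : ℂ |
          Submodule.map (uAut ℓ γ').toLinearMap (degPart I d) = degPart I d}.Infinite :=
        Set.infinite_of_injective_forall_mem hinj (fun n => hall n)
      exact (Set.not_infinite.2 hFix) hinf
    apply Set.Subsingleton.finite
    intro α hα α' hα'
    simp only [Set.mem_setOf_eq] at hα hα'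
    push_neg at hα hα'
    obtain ⟨lam, mu, hlam, hmu, heq, hnelm⟩ := hα
    obtain ⟨lam', mu', hlam', hmu', heq', hnelm'⟩ := hα'
    obtain ⟨ν, hν0, hν1, hrel⟩ := Stmt4.rel_of_bad hℓt (degPart I d) hlam hmu hnelm heq
    obtain ⟨ν', hν'0, hν'1, hrel'⟩ := Stmt4.rel_of_bad hℓt (degPart I d) hlam' hmu' hnelm' heq'
    have hcomb := Stmt4.combine hℓt (degPart I d) hν0 hν'0 hrel hrel'
    have hE := hFix0 _ hcomb
    have hkey : ((α' - α' / ν') / ν + (α - α / ν)) - ((α - α / ν) / ν' + (α' - α' / ν'))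
        = (α - α') * ((1 - ν⁻¹) * (1 - ν'⁻¹)) := by
      field_simp
      ring
    rw [hkey] at hE
    have h1 : (1 : ℂ) - ν⁻¹ ≠ 0 := by
      intro h
      exact hν1 (by rwa [sub_eq_zero, eq_comm, inv_eq_one] at h)
    have h1' : (1 : ℂ) - ν'⁻¹ ≠ 0 := by
      intro h
      exact hν'1 (by rwa [sub_eq_zero, eq_comm, inv_eq_one] at h)
    rcases mul_eq_zero.1 hE with h | h
    · exact sub_eq_zero.1 h
    · rcases mul_eq_zero.1 h with h' | h'
      · exact absurd h' h1
      · exact absurd h' h1'
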